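/- For the ellipse t²/σ² + σ²(ω − βt)² = C with 0 < σ < 1 and β > 0, the slope tan θ of the major axis (i.e., ω₁/t₁ where (t₁,ω₁) maximizes t² + ω² on the ellipse with t₁ > 0) satisfies tan θ ≥ √(1/σ⁴ − 1). -/

import Mathlib

/-- For the ellipse `t²/σ² + σ²(ω − βt)² = C` with `0 < σ < 1` and `β > 0`, the slope
of the major axis, `tan θ = 2β/(σ²(√(A²σ⁴ + 4β²) + Aσ²)) + β` with `A = 1 + β² − 1/σ⁴`,
satisfies `tan θ ≥ √(1/σ⁴ − 1)`. -/
theorem ellipse_slope_lower_bound (C σ β : ℝ) (hC : 0 < C) (hσ0 : 0 < σ) (hσ1 : σ < 1)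
    (hβ : 0 < β) (A : ℝ) (hA : A = 1 + β ^ 2 - 1 / σ ^ 4) :
    Real.sqrt (1 / σ ^ 4 - 1) ≤
      2 * β / (σ ^ 2 * (Real.sqrt (A ^ 2 * σ ^ 4 + 4 * β ^ 2) + A * σ ^ 2)) + β := by
  have hs : (0:ℝ) < σ ^ 2 := by positivity
  have hs4 : (0:ℝ) < σ ^ 4 := by positivity
  have hσ4 : σ ^ 4 < 1 := pow_lt_one₀ hσ0.le hσ1 (by norm_num)
  have h1 : (1:ℝ) ≤ 1 / σ ^ 4 := by
    rw [le_div_iff₀ hs4]; linarith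
  set L := Real.sqrt (1 / σ ^ 4 - 1) with hLdef
  have hL0 : 0 ≤ L := Real.sqrt_nonneg _
  have hL2 : L ^ 2 = 1 / σ ^ 4 - 1 := Real.sq_sqrt (by linarith)
  have hL2' : L ^ 2 * σ ^ 4 = 1 - σ ^ 4 := by
    rw [hL2]; field_simp
  set D := Real.sqrt (A ^ 2 * σ ^ 4 + 4 * β ^ 2) with hDdef
  have hD0 : 0 ≤ D := Real.sqrt_nonneg _
  have hD2 : D ^ 2 = A ^ 2 * σ ^ 4 + 4 * β ^ 2 := Real.sq_sqrt (by positivity)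
  have hDgt : -(A * σ ^ 2) < D := by
    by_contra h
    push_neg at h
    have h0 : 0 ≤ -(A * σ ^ 2) := hD0.trans h
    nlinarith [mul_self_le_mul_self hD0 h]
  have hpos : 0 < D + A * σ ^ 2 := by linarith
  have hden : 0 < σ ^ 2 * (D + A * σ ^ 2) := by positivity
  have hAσ4 : A * σ ^ 4 = σ ^ 4 + β ^ 2 * σ ^ 4 - 1 := by
    rw [hA]; field_simp
  have key : 2 * β * (L - β) * σ ^ 4 ≤ σ ^ 2 * (D - A * σ ^ 2) := by
    nlinarith [mul_nonneg hs4.le (sq_nonneg (L - β)), mul_nonneg hs.le hD0]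
  rw [← sub_le_iff_le_add, le_div_iff₀ hden]
  nlinarith [mul_le_mul_of_nonneg_right key hpos.le, mul_pos hβ hs]
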